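/- Let d ≥ 1, let W ∈ ℝ^{d×d} be symmetric positive definite and let r > 0. The function f(V) = (det V)^{-r/2} · exp(-(1/2)·tr(V^{-1}W)), defined on the set of symmetric positive definite d×d matrices V, attains its maximum value (det((1/r)W))^{-r/2} · e^{-rd/2} at V = (1/r)W, and at no other positive definite matrix. -/

import Mathlib

open Matrix Real

private lemma tdc_scalar_lt {r x : ℝ} (hr : 0 < r) (hx : 0 < x) (hne : x ≠ r) :
    r * Real.log x - x < r * Real.log r - r := by
  have h1 : Real.log (x / r) < x / r - 1 :=
    Real.log_lt_sub_one_of_pos (div_pos hx hr)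
      (fun h => hne ((div_eq_one_iff_eq hr.ne').mp h))
  rw [Real.log_div hx.ne' hr.ne'] at h1
  have h2 := mul_lt_mul_of_pos_left h1 hr
  have h3 : r * (x / r - 1) = x - r := by field_simp
  rw [h3, mul_sub] at h2
  linarith

private lemma tdc_scalar_le {r x : ℝ} (hr : 0 < r) (hx : 0 < x) :
    r * Real.log x - x ≤ r * Real.log r - r := by
  rcases eq_or_ne x r with h | h
  · subst h; exact le_refl _
  · exact (tdc_scalar_lt hr hx h).le

private lemma tdc_posDef_conj {n : Type*} [Fintype n] [DecidableEq n]
    {P : Matrix n n ℝ} (hP : P.PosDef) {B : Matrix n n ℝ} (hB : IsUnit B) :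
    (Bᴴ * P * B).PosDef := by
  exact hP.conjTranspose_mul_mul_same (Matrix.mulVec_injective_iff_isUnit.mpr hB)

private lemma tdc_trace_eq_sum_eig {n : Type*} [Fintype n] [DecidableEq n]
    {A : Matrix n n ℝ} (hA : A.IsHermitian) : A.trace = ∑ i, hA.eigenvalues i := by
  have h1 : (star (hA.eigenvectorUnitary : Matrix n n ℝ)) *
      (hA.eigenvectorUnitary : Matrix n n ℝ) = 1 :=
    Matrix.mem_unitaryGroup_iff'.mp (hA.eigenvectorUnitary).2
  conv_lhs => rw [hA.spectral_theorem]
  rw [Unitary.conjStarAlgAut_apply, Matrix.trace_mul_cycle, h1, one_mul, Matrix.trace_diagonal]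
  simp [RCLike.ofReal_real_eq_id]

open scoped MatrixOrder in
private lemma tdc_aux_decomp {d : ℕ} (r : ℝ) (hr : 0 < r)
    {W : Matrix (Fin d) (Fin d) ℝ} (hW : W.PosDef)
    {V : Matrix (Fin d) (Fin d) ℝ} (hV : V.PosDef) :
    ∃ lam : Fin d → ℝ, (∀ i, 0 < lam i) ∧
      Real.log V.det = Real.log W.det - ∑ i, Real.log (lam i) ∧
      (V⁻¹ * W).trace = ∑ i, lam i ∧
      ((∀ i, lam i = r) → V = r⁻¹ • W) := by
  classical
  set S := CFC.sqrt W with hSdef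
  have hS2 : S * S = W := CFC.sqrt_mul_sqrt_self W hW.posSemidef.nonneg
  have hSH : S.IsHermitian := (CFC.sqrt_nonneg W).posSemidef.isHermitian
  have hdetS : S.det ≠ 0 := by
    intro h
    have : W.det = 0 := by rw [← hS2, Matrix.det_mul, h, zero_mul]
    exact hW.det_pos.ne' this
  have hSU : IsUnit S := (Matrix.isUnit_iff_isUnit_det S).mpr (isUnit_iff_ne_zero.mpr hdetS)
  have hVdet : IsUnit V.det := isUnit_iff_ne_zero.mpr hV.det_pos.ne'
  set A := S * V⁻¹ * S with hAdef
  have hA : A.PosDef := by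
    have := tdc_posDef_conj hV.inv hSU
    rwa [hSH.eq] at this
  set lam := hA.1.eigenvalues with hlamdef
  have hpos : ∀ i, 0 < lam i := hA.eigenvalues_pos
  have hdetA : A.det = ∏ i, lam i := by
    simpa [RCLike.ofReal_real_eq_id] using hA.1.det_eq_prod_eigenvalues
  have htrA : A.trace = ∑ i, lam i := tdc_trace_eq_sum_eig hA.1
  have hdetVinv : V⁻¹.det * V.det = 1 := by
    rw [← Matrix.det_mul, Matrix.nonsing_inv_mul V hVdet, Matrix.det_one]
  have hdetA' : A.det * V.det = W.det := by
    rw [hAdef, Matrix.det_mul, Matrix.det_mul]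
    calc S.det * V⁻¹.det * S.det * V.det = S.det * S.det * (V⁻¹.det * V.det) := by ring
    _ = W.det := by rw [hdetVinv, mul_one, ← Matrix.det_mul, hS2]
  refine ⟨lam, hpos, ?_, ?_, ?_⟩
  · have hAdetpos : 0 < A.det := hA.det_pos
    have hWlog : Real.log W.det = Real.log A.det + Real.log V.det := by
      rw [← hdetA', Real.log_mul hAdetpos.ne' hV.det_pos.ne']
    have hlogA : Real.log A.det = ∑ i, Real.log (lam i) := by
      rw [hdetA]
      exact Real.log_prod (fun i _ => (hpos i).ne')
    rw [hWlog, hlogA]; ring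
  · rw [← htrA, hAdef, Matrix.trace_mul_cycle, hS2, Matrix.trace_mul_comm]
  · intro hall
    have hDfun : (RCLike.ofReal ∘ lam : Fin d → ℝ) = fun _ => r := by
      funext i
      simp [hall i, RCLike.ofReal_real_eq_id]
    have hD : Matrix.diagonal (RCLike.ofReal ∘ lam) =
        r • (1 : Matrix (Fin d) (Fin d) ℝ) := by
      rw [hDfun]
      ext i j
      by_cases h : i = j <;> simp [Matrix.diagonal_apply, Matrix.one_apply, h]
    have hU : (hA.1.eigenvectorUnitary : Matrix (Fin d) (Fin d) ℝ) *
        star (hA.1.eigenvectorUnitary : Matrix (Fin d) (Fin d) ℝ) = 1 :=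
      Matrix.mem_unitaryGroup_iff.mp (hA.1.eigenvectorUnitary).2
    have hAr : A = r • (1 : Matrix (Fin d) (Fin d) ℝ) := by
      conv_lhs => rw [hA.1.spectral_theorem]
      rw [Unitary.conjStarAlgAut_apply, hD, mul_smul_comm, smul_mul_assoc, mul_one, hU]
    have hSdetU : IsUnit S.det := isUnit_iff_ne_zero.mpr hdetS
    have hSinv : S⁻¹ * S = 1 := Matrix.nonsing_inv_mul S hSdetU
    have hSinv' : S * S⁻¹ = 1 := Matrix.mul_nonsing_inv S hSdetU
    have hVinv : V⁻¹ = r • (S⁻¹ * S⁻¹) := by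
      calc V⁻¹ = S⁻¹ * S * V⁻¹ * (S * S⁻¹) := by rw [hSinv, hSinv', one_mul, mul_one]
      _ = S⁻¹ * A * S⁻¹ := by rw [hAdef]; simp only [Matrix.mul_assoc]
      _ = r • (S⁻¹ * S⁻¹) := by rw [hAr, mul_smul_comm, smul_mul_assoc, mul_one]
    have hWinv : S⁻¹ * S⁻¹ = W⁻¹ := by rw [← Matrix.mul_inv_rev, hS2]
    have hV0inv : (r⁻¹ • W)⁻¹ = r • W⁻¹ := by
      apply Matrix.inv_eq_right_inv
      rw [smul_mul_assoc, mul_smul_comm, Matrix.mul_nonsing_inv W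
        (isUnit_iff_ne_zero.mpr hW.det_pos.ne'), smul_smul, inv_mul_cancel₀ hr.ne', one_smul]
    have hVinv2 : V⁻¹ = (r⁻¹ • W)⁻¹ := by rw [hVinv, hWinv, hV0inv]
    have hdetV0 : IsUnit (r⁻¹ • W).det := by
      rw [Matrix.det_smul]
      exact isUnit_iff_ne_zero.mpr
        (mul_ne_zero (pow_ne_zero _ (inv_ne_zero hr.ne')) hW.det_pos.ne')
    calc V = V⁻¹⁻¹ := (Matrix.nonsing_inv_nonsing_inv V hVdet).symm
    _ = ((r⁻¹ • W)⁻¹)⁻¹ := by rw [hVinv2]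
    _ = r⁻¹ • W := Matrix.nonsing_inv_nonsing_inv _ hdetV0

/-- Let `d ≥ 1`, let `W` be a symmetric positive definite real `d × d`
matrix and let `r > 0`.  The function
`f(V) = (det V)^(-r/2) · exp(-(1/2)·tr(V⁻¹W))`, defined on positive definite matrices,
attains its maximum value `(det((1/r)·W))^(-r/2) · e^(-r·d/2)` at `V = (1/r)·W`, and at no
other positive definite matrix. -/
theorem tdc_covariance_ml_estimator {d : ℕ} (hd : 1 ≤ d) (r : ℝ) (hr : 0 < r)
    (W : Matrix (Fin d) (Fin d) ℝ) (hW : W.PosDef)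
    (f : Matrix (Fin d) (Fin d) ℝ → ℝ)
    (hf : ∀ V : Matrix (Fin d) (Fin d) ℝ,
      f V = V.det ^ (-(r / 2)) * Real.exp (-(1 / 2) * (V⁻¹ * W).trace)) :
    f (r⁻¹ • W) = ((r⁻¹ • W).det) ^ (-(r / 2)) * Real.exp (-(r * d) / 2) ∧
    (∀ V : Matrix (Fin d) (Fin d) ℝ, V.PosDef → f V ≤ f (r⁻¹ • W)) ∧
    (∀ V : Matrix (Fin d) (Fin d) ℝ, V.PosDef → f V = f (r⁻¹ • W) → V = r⁻¹ • W) := by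
  classical
  have hWdet : IsUnit W.det := isUnit_iff_ne_zero.mpr hW.det_pos.ne'
  have hdet0 : (r⁻¹ • W).det = (r⁻¹) ^ d * W.det := by
    rw [Matrix.det_smul, Fintype.card_fin]
  have hdet0pos : 0 < (r⁻¹ • W).det := by
    rw [hdet0]; exact mul_pos (pow_pos (inv_pos.mpr hr) d) hW.det_pos
  have hV0inv : (r⁻¹ • W)⁻¹ = r • W⁻¹ := by
    apply Matrix.inv_eq_right_inv
    rw [smul_mul_assoc, mul_smul_comm, Matrix.mul_nonsing_inv W hWdet, smul_smul,
      inv_mul_cancel₀ hr.ne', one_smul]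
  have htr0 : ((r⁻¹ • W)⁻¹ * W).trace = r * d := by
    rw [hV0inv, smul_mul_assoc, Matrix.nonsing_inv_mul W hWdet, Matrix.trace_smul,
      Matrix.trace_one]
    simp [Fintype.card_fin]
  have hfexp : ∀ V : Matrix (Fin d) (Fin d) ℝ, 0 < V.det →
      f V = Real.exp (Real.log V.det * (-(r / 2)) + -(1 / 2) * (V⁻¹ * W).trace) := by
    intro V hVd
    rw [hf V, Real.rpow_def_of_pos hVd, ← Real.exp_add]
  have h1 : f (r⁻¹ • W) = ((r⁻¹ • W).det) ^ (-(r / 2)) * Real.exp (-(r * d) / 2) := by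
    rw [hf, htr0]
    ring_nf
  have hgv0 : Real.log (r⁻¹ • W).det * (-(r / 2)) + -(1 / 2) * (((r⁻¹ • W))⁻¹ * W).trace
      = Real.log W.det * (-(r / 2)) + (1 / 2) * (d * (r * Real.log r - r)) := by
    rw [htr0, hdet0, Real.log_mul (pow_ne_zero _ (inv_ne_zero hr.ne')) hW.det_pos.ne',
      Real.log_pow, Real.log_inv]
    ring
  have hconst : ∑ _i : Fin d, (r * Real.log r - r) = d * (r * Real.log r - r) := by
    simp [Finset.sum_const, Finset.card_univ, nsmul_eq_mul]
    ring
  refine ⟨h1, ?_, ?_⟩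
  · intro V hV
    obtain ⟨lam, hpos, hlog, htr, _⟩ := tdc_aux_decomp r hr hW hV
    have hgv : Real.log V.det * (-(r / 2)) + -(1 / 2) * (V⁻¹ * W).trace
        = Real.log W.det * (-(r / 2)) + (1 / 2) * ∑ i, (r * Real.log (lam i) - lam i) := by
      rw [hlog, htr, Finset.sum_sub_distrib, ← Finset.mul_sum]
      ring
    have hkey : ∑ i, (r * Real.log (lam i) - lam i) ≤ ∑ _i : Fin d, (r * Real.log r - r) :=
      Finset.sum_le_sum (fun i _ => tdc_scalar_le hr (hpos i))
    rw [hfexp V hV.det_pos, hfexp _ hdet0pos, Real.exp_le_exp, hgv, hgv0]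
    rw [hconst] at hkey
    linarith
  · intro V hV hfeq
    obtain ⟨lam, hpos, hlog, htr, heq⟩ := tdc_aux_decomp r hr hW hV
    have hgv : Real.log V.det * (-(r / 2)) + -(1 / 2) * (V⁻¹ * W).trace
        = Real.log W.det * (-(r / 2)) + (1 / 2) * ∑ i, (r * Real.log (lam i) - lam i) := by
      rw [hlog, htr, Finset.sum_sub_distrib, ← Finset.mul_sum]
      ring
    rw [hfexp V hV.det_pos, hfexp _ hdet0pos, Real.exp_eq_exp, hgv, hgv0] at hfeq
    have hsum : ∑ i, (r * Real.log (lam i) - lam i) = ∑ _i : Fin d, (r * Real.log r - r) := by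
      rw [hconst]; linarith
    apply heq
    intro i
    by_contra hne
    have hstrict : ∑ i, (r * Real.log (lam i) - lam i) < ∑ _i : Fin d, (r * Real.log r - r) :=
      Finset.sum_lt_sum (fun j _ => tdc_scalar_le hr (hpos j))
        ⟨i, Finset.mem_univ i, tdc_scalar_lt hr (hpos i) hne⟩
    rw [hsum] at hstrict
    exact lt_irrefl _ hstrict
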